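/- For a = 2w (i.e., 50% of buckets removed), the expected number of hash operations in AnchorHash satisfies E[τ] = 1 + ∑_{j=1}^{w} 1/(w+j) ≤ 1 + ln 2 < 1.694, and Var(τ) ≤ ln 2, so the standard deviation is less than 0.833. -/

import Mathlib

open Finset Real

lemma harm_le_log2 (w : ℕ) (hw : 1 ≤ w) :
    ∑ j ∈ Finset.Icc 1 w, 1 / ((w : ℝ) + j) ≤ Real.log 2 := by
  have hw' : (0:ℝ) < w := by exact_mod_cast hw
  have key : ∀ j ∈ Finset.Icc 1 w, 1 / ((w : ℝ) + j)
      ≤ Real.log ((w:ℝ) + j) - Real.log ((w:ℝ) + j - 1) := by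
    intro j hj
    simp only [Finset.mem_Icc] at hj
    have hj1 : (1:ℝ) ≤ (j:ℝ) := by exact_mod_cast hj.1
    have hx : (0:ℝ) < (w:ℝ) + j := by linarith
    have hx1 : (0:ℝ) < (w:ℝ) + j - 1 := by linarith
    have h := Real.log_le_sub_one_of_pos (x := ((w:ℝ) + j - 1) / ((w:ℝ) + j))
      (by positivity)
    rw [Real.log_div (by linarith) (by linarith)] at h
    have : ((w:ℝ) + j - 1) / ((w:ℝ) + j) - 1 = -(1 / ((w:ℝ) + j)) := by
      field_simp
      ring
    rw [this] at h
    linarith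
  calc ∑ j ∈ Finset.Icc 1 w, 1 / ((w : ℝ) + j)
      ≤ ∑ j ∈ Finset.Icc 1 w, (Real.log ((w:ℝ) + j) - Real.log ((w:ℝ) + j - 1)) :=
        Finset.sum_le_sum key
    _ = Real.log (2 * w) - Real.log w := by
        rw [show Finset.Icc 1 w = Finset.Ico 1 (w+1) from rfl, Finset.sum_Ico_eq_sum_range]
        have := Finset.sum_range_sub (fun n => Real.log ((w:ℝ) + n)) w
        rw [show w + 1 - 1 = w from rfl]
        convert this using 2 with n
        all_goals push_cast; ring_nf
    _ = Real.log 2 := by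
        rw [Real.log_mul (by norm_num) (by positivity), add_sub_cancel_right]

theorem anchorhash_half_removed (w : ℕ) (hw : 1 ≤ w) :
    1 + ∑ j ∈ Finset.Icc 1 w, 1 / ((w : ℝ) + j) ≤ 1 + Real.log 2
      ∧ (1 : ℝ) + Real.log 2 < 1.694
      ∧ ∑ j ∈ Finset.Icc 1 w, ((w : ℝ) + j - 1) / ((w : ℝ) + j) ^ 2 ≤ Real.log 2
      ∧ Real.sqrt (Real.log 2) < 0.833 := by
  have h1 := harm_le_log2 w hw
  have hlog : Real.log 2 < 0.6931471808 := Real.log_two_lt_d9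
  refine ⟨by linarith, by linarith, ?_, ?_⟩
  · refine le_trans (le_trans (Finset.sum_le_sum ?_) (le_of_eq rfl)) h1
    intro j hj
    simp only [Finset.mem_Icc] at hj
    have hj1 : (1:ℝ) ≤ (j:ℝ) := by exact_mod_cast hj.1
    have hw' : (0:ℝ) < w := by exact_mod_cast hw
    rw [div_le_div_iff₀ (by positivity) (by positivity)]
    ring_nf
    nlinarith
  · have : Real.sqrt (Real.log 2) < Real.sqrt (0.833^2) := by
      apply Real.sqrt_lt_sqrt (Real.log_nonneg (by norm_num))
      nlinarith
    rwa [Real.sqrt_sq (by norm_num)] at this
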